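/- arXiv:2501.10655 — 2 statements merged into one kernel-verified Lean document; each statement's English description precedes it below -/
import Mathlib

section
/- Let n > 0 be a real number and p₁, p₂ ∈ (0, 1]. Let NB_{p₁} and NB_{p₂} denote the probability measures on the nonnegative integers with probability mass functions x ↦ Γ(x+n)/(Γ(x+1)·Γ(n)) · p_iⁿ · (1−p_i)ˣ for i = 1, 2. Then the total variation distance satisfies TV(NB_{p₁}, NB_{p₂}) ≤ 1 − exp(−n·|(1−p₁)/p₁ − (1−p₂)/p₂|). -/
/-- The negative binomial probability mass function with real parameters `n > 0`
and `p ∈ (0,1]`. -/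
noncomputable def nbPMF (n p : ℝ) (x : ℕ) : ℝ :=
  Real.Gamma (x + n) / (Real.Gamma (x + 1) * Real.Gamma n) * p ^ n * (1 - p) ^ x

open Real Filter Topology

/-- The coefficient `Γ(x+n)/(x! Γ(n))` of the negative binomial series. -/
noncomputable def nbA (n : ℝ) (x : ℕ) : ℝ :=
  Real.Gamma (x + n) / (x.factorial * Real.Gamma n)

lemma nbA_pos {n : ℝ} (hn : 0 < n) (x : ℕ) : 0 < nbA n x := by
  have h1 : 0 < Real.Gamma ((x : ℝ) + n) :=
    Real.Gamma_pos_of_pos (by positivity)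
  have h2 : 0 < Real.Gamma n := Real.Gamma_pos_of_pos hn
  have h3 : (0:ℝ) < x.factorial := by exact_mod_cast x.factorial_pos
  exact div_pos h1 (by positivity)

lemma nbA_zero {n : ℝ} (hn : 0 < n) : nbA n 0 = 1 := by
  have h2 : Real.Gamma n ≠ 0 := (Real.Gamma_pos_of_pos hn).ne'
  simp [nbA, h2]

lemma nbA_rec {n : ℝ} (hn : 0 < n) (x : ℕ) :
    ((x:ℝ) + 1) * nbA n (x+1) = ((x:ℝ) + n) * nbA n x := by
  have hx : ((x:ℝ) + n) ≠ 0 := by positivity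
  have hΓ : Real.Gamma (((x+1 : ℕ) : ℝ) + n) = ((x:ℝ) + n) * Real.Gamma ((x:ℝ) + n) := by
    rw [show (((x+1 : ℕ) : ℝ) + n) = ((x:ℝ) + n) + 1 by push_cast; ring]
    exact Real.Gamma_add_one hx
  have hfac : (((x+1).factorial : ℕ) : ℝ) = ((x:ℝ) + 1) * (x.factorial : ℝ) := by
    rw [Nat.factorial_succ]; push_cast; ring
  have h2 : Real.Gamma n ≠ 0 := (Real.Gamma_pos_of_pos hn).ne'
  have hf : (x.factorial : ℝ) ≠ 0 := by exact_mod_cast x.factorial_ne_zero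
  unfold nbA
  rw [hΓ, hfac]
  field_simp

/-- Summability of the series `∑ (x+n) a_x r^x`. -/
lemma nb_summable_b {n : ℝ} (hn : 0 < n) {r : ℝ} (h0 : 0 ≤ r) (h1 : r < 1) :
    Summable (fun x : ℕ => ((x:ℝ) + n) * nbA n x * r ^ x) := by
  rcases eq_or_lt_of_le h0 with h | h
  · apply summable_of_ne_finset_zero (s := {0})
    intro x hx
    simp only [Finset.mem_singleton] at hx
    simp [← h, zero_pow hx]
  · apply summable_of_ratio_test_tendsto_lt_one h1
    · filter_upwards with x
      have := nbA_pos hn x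
      have hx : (0:ℝ) < (x:ℝ) + n := by positivity
      positivity
    · have key : ∀ x : ℕ,
          ‖(((x+1:ℕ):ℝ) + n) * nbA n (x+1) * r ^ (x+1)‖ / ‖((x:ℝ) + n) * nbA n x * r ^ x‖
            = (1 + n / ((x:ℝ) + 1)) * r := by
        intro x
        have ha := nbA_pos hn x
        have ha' := nbA_pos hn (x+1)
        have hx : (0:ℝ) < (x:ℝ) + n := by positivity
        have hx1 : (0:ℝ) < (x:ℝ) + 1 := by positivity
        have hx1n : (0:ℝ) < ((x+1:ℕ):ℝ) + n := by positivity
        have hrp : (0:ℝ) < r ^ x := by positivity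
        rw [Real.norm_of_nonneg (by positivity), Real.norm_of_nonneg (by positivity)]
        have hrec := nbA_rec hn x
        have : nbA n (x+1) = ((x:ℝ) + n) * nbA n x / ((x:ℝ) + 1) := by
          field_simp at hrec ⊢; linarith
        rw [this]
        push_cast
        field_simp
        ring
      refine Tendsto.congr (fun x => (key x).symm) ?_
      have h2 : Tendsto (fun x : ℕ => n / ((x:ℝ) + 1)) atTop (𝓝 0) := by
        apply Tendsto.div_atTop tendsto_const_nhds
        exact tendsto_atTop_add_const_right _ _ tendsto_natCast_atTop_atTop
      have h3 : Tendsto (fun x : ℕ => (1 + n / ((x:ℝ) + 1)) * r) atTop (𝓝 ((1 + 0) * r)) :=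
        ((tendsto_const_nhds.add h2).mul_const r)
      simpa using h3

lemma nb_summable_a {n : ℝ} (hn : 0 < n) {r : ℝ} (h0 : 0 ≤ r) (h1 : r < 1) :
    Summable (fun x : ℕ => nbA n x * r ^ x) := by
  refine Summable.of_nonneg_of_le (fun x => ?_) (fun x => ?_)
    ((nb_summable_b hn h0 h1).mul_left n⁻¹)
  · have := nbA_pos hn x; positivity
  · have ha := (nbA_pos hn x).le
    have hrx : (0:ℝ) ≤ r ^ x := by positivity
    have h : n * (nbA n x * r ^ x) ≤ ((x:ℝ) + n) * (nbA n x * r ^ x) := by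
      apply mul_le_mul_of_nonneg_right _ (by positivity)
      have : (0:ℝ) ≤ (x:ℝ) := Nat.cast_nonneg x
      linarith
    calc nbA n x * r ^ x = n⁻¹ * (n * (nbA n x * r ^ x)) := by field_simp
      _ ≤ n⁻¹ * (((x:ℝ) + n) * (nbA n x * r ^ x)) := by
          exact mul_le_mul_of_nonneg_left h (by positivity)
      _ = n⁻¹ * (((x:ℝ) + n) * nbA n x * r ^ x) := by ring

/-- Summability of the term-by-term derivative series. -/
lemma nb_summable_deriv {n : ℝ} (hn : 0 < n) {r : ℝ} (h0 : 0 ≤ r) (h1 : r < 1) :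
    Summable (fun x : ℕ => nbA n x * ((x:ℝ) * r ^ (x-1))) := by
  rw [← summable_nat_add_iff 1]
  refine (nb_summable_b hn h0 h1).congr fun x => ?_
  have hrec := nbA_rec hn x
  have he : x + 1 - 1 = x := rfl
  rw [he]
  push_cast
  linear_combination (-(r ^ x)) * hrec

lemma nb_hasDerivAt {n : ℝ} (hn : 0 < n) {r : ℝ} (hr0 : 0 < r) (hr1 : r < 1) {y : ℝ}
    (hy : y ∈ Set.Ioo (-r) r) :
    HasDerivAt (fun z => ∑' x : ℕ, nbA n x * z ^ x)
      (∑' x : ℕ, nbA n x * ((x:ℝ) * y ^ (x-1))) y := by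
  refine hasDerivAt_tsum_of_isPreconnected (𝕜 := ℝ) (F := ℝ)
    (g := fun (x : ℕ) (z : ℝ) => nbA n x * z ^ x)
    (g' := fun (x : ℕ) (z : ℝ) => nbA n x * ((x:ℝ) * z ^ (x-1)))
    (u := fun x : ℕ => nbA n x * ((x:ℝ) * r ^ (x-1)))
    (nb_summable_deriv hn hr0.le hr1) isOpen_Ioo ((convex_Ioo _ _).isPreconnected)
    (fun x z _ => ?_) (fun x z hz => ?_)
    (show (0:ℝ) ∈ Set.Ioo (-r) r by constructor <;> linarith) ?_ hy
  · exact (hasDerivAt_pow x z).const_mul (nbA n x)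
  · have ha := (nbA_pos hn x).le
    have hz' : |z| ≤ r := by
      rw [abs_le]; exact ⟨hz.1.le, hz.2.le⟩
    have : |z| ^ (x-1) ≤ r ^ (x-1) := pow_le_pow_left₀ (abs_nonneg z) hz' _
    rw [norm_mul, norm_mul, Real.norm_of_nonneg ha, Real.norm_of_nonneg (Nat.cast_nonneg x),
      norm_pow, Real.norm_eq_abs]
    exact mul_le_mul_of_nonneg_left
      (mul_le_mul_of_nonneg_left this (Nat.cast_nonneg x)) ha
  · apply summable_of_ne_finset_zero (s := {0})
    intro x hx
    simp only [Finset.mem_singleton] at hx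
    simp [zero_pow hx]

/-- The functional identity `(1-z) F'(z) = n F(z)`. -/
lemma nb_deriv_identity {n : ℝ} (hn : 0 < n) {z : ℝ} (h0 : 0 ≤ z) (h1 : z < 1) :
    (1 - z) * (∑' x : ℕ, nbA n x * ((x:ℝ) * z ^ (x-1)))
      = n * ∑' x : ℕ, nbA n x * z ^ x := by
  have hb : Summable (fun x : ℕ => ((x:ℝ) + n) * nbA n x * z ^ x) := nb_summable_b hn h0 h1
  have ha : Summable (fun x : ℕ => nbA n x * z ^ x) := nb_summable_a hn h0 h1
  have hc : Summable (fun x : ℕ => (x:ℝ) * nbA n x * z ^ x) := by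
    refine (hb.sub (ha.mul_left n)).congr fun x => ?_
    ring
  -- Step 1 : shift the derivative series
  have hshift : (∑' x : ℕ, nbA n x * ((x:ℝ) * z ^ (x-1)))
      = ∑' x : ℕ, ((x:ℝ) + n) * nbA n x * z ^ x := by
    rw [Summable.tsum_eq_zero_add (nb_summable_deriv hn h0 h1)]
    simp only [Nat.cast_zero, zero_mul, mul_zero, zero_add]
    apply tsum_congr
    intro x
    have hrec := nbA_rec hn x
    have he : x + 1 - 1 = x := rfl
    rw [he]
    push_cast
    linear_combination (z ^ x) * hrec
  -- Step 2 : z * B = C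
  have hstep2 : z * (∑' x : ℕ, ((x:ℝ) + n) * nbA n x * z ^ x)
      = ∑' x : ℕ, (x:ℝ) * nbA n x * z ^ x := by
    rw [Summable.tsum_eq_zero_add hc]
    simp only [Nat.cast_zero, zero_mul, zero_add]
    rw [← tsum_mul_left]
    apply tsum_congr
    intro x
    have hrec := nbA_rec hn x
    push_cast
    rw [pow_succ]
    linear_combination (-(z ^ x * z)) * hrec
  -- Step 3
  rw [hshift, sub_mul, one_mul, hstep2, ← tsum_mul_left]
  rw [← Summable.tsum_sub hb hc]
  apply tsum_congr
  intro x
  ring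

/-- The negative binomial series sums to `(1-q)^(-n)`. -/
lemma nbA_tsum {n : ℝ} (hn : 0 < n) {q : ℝ} (h0 : 0 ≤ q) (h1 : q < 1) :
    ∑' x : ℕ, nbA n x * q ^ x = (1 - q) ^ (-n) := by
  set r : ℝ := (1 + q) / 2 with hr
  have hr0 : 0 < r := by rw [hr]; linarith
  have hrq : q < r := by rw [hr]; linarith
  have hr1 : r < 1 := by rw [hr]; linarith
  set F : ℝ → ℝ := fun z => ∑' x : ℕ, nbA n x * z ^ x with hF
  set h : ℝ → ℝ := fun z => F z * (1 - z) ^ n with hh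
  have hsub : Set.Icc (0:ℝ) q ⊆ Set.Ioo (-r) r := fun z hz =>
    ⟨by have := hz.1; linarith, lt_of_le_of_lt hz.2 hrq⟩
  have hderiv : ∀ z ∈ Set.Icc (0:ℝ) q, HasDerivAt h 0 z := by
    intro z hz
    have hz0 : 0 ≤ z := hz.1
    have hz1 : z < 1 := lt_of_le_of_lt hz.2 h1
    have hz1' : (0:ℝ) < 1 - z := by linarith
    have hF' : HasDerivAt F (∑' x : ℕ, nbA n x * ((x:ℝ) * z ^ (x-1))) z :=
      nb_hasDerivAt hn hr0 hr1 (hsub hz)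
    have hlin : HasDerivAt (fun w : ℝ => 1 - w) (-1) z := by
      simpa using (hasDerivAt_id' z).const_sub (1:ℝ)
    have hG : HasDerivAt (fun w : ℝ => (1 - w) ^ n) (-1 * n * (1 - z) ^ (n - 1)) z :=
      hlin.rpow_const (Or.inl hz1'.ne')
    have hprod := hF'.mul hG
    have heq : (∑' x : ℕ, nbA n x * ((x:ℝ) * z ^ (x-1))) * (1 - z) ^ n
        + F z * (-1 * n * (1 - z) ^ (n - 1)) = 0 := by
      have hid := nb_deriv_identity hn hz0 hz1
      have hpow : (1 - z) ^ n = (1 - z) ^ (n - 1) * (1 - z) := by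
        rw [← Real.rpow_add_one hz1'.ne' (n-1)]
        ring_nf
      rw [hpow]
      have : (∑' x : ℕ, nbA n x * ((x:ℝ) * z ^ (x-1))) * ((1 - z) ^ (n-1) * (1 - z))
          = ((1 - z) * (∑' x : ℕ, nbA n x * ((x:ℝ) * z ^ (x-1)))) * (1 - z) ^ (n-1) := by ring
      rw [this, hid]
      ring
    rw [hh]
    exact hprod.congr_deriv heq
  have hconst : h q = h 0 := by
    have := constant_of_has_deriv_right_zero
      (f := h) (a := 0) (b := q)
      (fun z hz => (hderiv z hz).continuousAt.continuousWithinAt)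
      (fun z hz => ((hderiv z ⟨hz.1, hz.2.le⟩).hasDerivWithinAt))
    exact this q ⟨h0, le_rfl⟩
  have hF0 : F 0 = 1 := by
    have h00 : F 0 = ∑' x : ℕ, nbA n x * (0:ℝ) ^ x := rfl
    rw [h00, tsum_eq_single 0 (fun x hx => by simp [zero_pow hx])]
    simp [nbA_zero hn]
  have hq1 : (0:ℝ) < 1 - q := by linarith
  have hkey : F q * (1 - q) ^ n = 1 := by
    have h1' : h q = F q * (1 - q) ^ n := rfl
    have h2' : h 0 = 1 := by
      have h0' : h 0 = F 0 * ((1:ℝ) - 0) ^ n := rfl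
      rw [h0', hF0]
      simp
    rw [← h1', hconst, h2']
  have hpos : (0:ℝ) < (1 - q) ^ n := Real.rpow_pos_of_pos hq1 n
  have hFq : (∑' x : ℕ, nbA n x * q ^ x) = F q := rfl
  rw [hFq, Real.rpow_neg hq1.le]
  exact eq_inv_of_mul_eq_one_left (by linear_combination hkey)

lemma nbPMF_eq (n p : ℝ) (x : ℕ) : nbPMF n p x = p ^ n * (nbA n x * (1-p) ^ x) := by
  unfold nbPMF nbA
  rw [Real.Gamma_nat_eq_factorial]
  ring

lemma nbPMF_nonneg {n p : ℝ} (hn : 0 < n) (hp : p ∈ Set.Ioc (0:ℝ) 1) (x : ℕ) :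
    0 ≤ nbPMF n p x := by
  rw [nbPMF_eq]
  have h1 : (0:ℝ) ≤ p ^ n := (Real.rpow_pos_of_pos hp.1 n).le
  have h2 := (nbA_pos hn x).le
  have h3 : (0:ℝ) ≤ (1 - p) ^ x := pow_nonneg (by linarith [hp.2]) x
  positivity

lemma nbPMF_summable {n p : ℝ} (hn : 0 < n) (hp : p ∈ Set.Ioc (0:ℝ) 1) :
    Summable (nbPMF n p) := by
  have h0 : (0:ℝ) ≤ 1 - p := by linarith [hp.2]
  have h1 : 1 - p < 1 := by linarith [hp.1]
  refine ((nb_summable_a hn h0 h1).mul_left (p ^ n)).congr fun x => ?_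
  rw [nbPMF_eq]

lemma nbPMF_tsum {n p : ℝ} (hn : 0 < n) (hp : p ∈ Set.Ioc (0:ℝ) 1) :
    ∑' x : ℕ, nbPMF n p x = 1 := by
  have h0 : (0:ℝ) ≤ 1 - p := by linarith [hp.2]
  have h1 : 1 - p < 1 := by linarith [hp.1]
  calc ∑' x : ℕ, nbPMF n p x = ∑' x : ℕ, p ^ n * (nbA n x * (1-p) ^ x) := by
        exact tsum_congr fun x => nbPMF_eq n p x
    _ = p ^ n * ∑' x : ℕ, nbA n x * (1-p) ^ x := tsum_mul_left
    _ = p ^ n * (1 - (1 - p)) ^ (-n) := by rw [nbA_tsum hn h0 h1]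
    _ = p ^ n * p ^ (-n) := by ring_nf
    _ = 1 := by
        rw [← Real.rpow_add hp.1]
        simp

/-- Pointwise comparison of two negative binomial weights with `p₂ ≤ p₁`. -/
lemma nbPMF_pointwise {n p₁ p₂ : ℝ} (hn : 0 < n) (hp₁ : p₁ ∈ Set.Ioc (0:ℝ) 1)
    (hp₂ : p₂ ∈ Set.Ioc (0:ℝ) 1) (hle : p₂ ≤ p₁) (x : ℕ) :
    Real.exp (-(n * ((1 - p₂) / p₂ - (1 - p₁) / p₁))) * nbPMF n p₁ x ≤ nbPMF n p₂ x := by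
  obtain ⟨h₁0, h₁1⟩ := hp₁
  obtain ⟨h₂0, h₂1⟩ := hp₂
  have hd : (1 - p₂) / p₂ - (1 - p₁) / p₁ = (p₁ - p₂) / (p₁ * p₂) := by
    field_simp
    ring
  have hlog : Real.log (p₁ / p₂) ≤ (p₁ - p₂) / (p₁ * p₂) := by
    have h1 := Real.log_le_sub_one_of_pos (show (0:ℝ) < p₁ / p₂ by positivity)
    have h2 : p₁ / p₂ - 1 ≤ (p₁ - p₂) / (p₁ * p₂) := by
      rw [div_sub_one h₂0.ne', div_le_div_iff₀ h₂0 (by positivity)]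
      nlinarith [mul_nonneg (mul_nonneg (sub_nonneg.2 hle) (sub_nonneg.2 h₁1)) h₂0.le]
    linarith
  have hexp : Real.exp (-(n * ((1 - p₂) / p₂ - (1 - p₁) / p₁))) ≤ (p₂ / p₁) ^ n := by
    rw [hd]
    have hrw : (p₂ / p₁) ^ n = Real.exp (n * Real.log (p₂ / p₁)) := by
      rw [Real.rpow_def_of_pos (by positivity)]
      ring_nf
    rw [hrw]
    apply Real.exp_le_exp.2
    have : Real.log (p₂ / p₁) = -Real.log (p₁ / p₂) := by
      rw [← Real.log_inv]
      congr 1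
      field_simp
    rw [this]
    nlinarith [hn.le, hlog, hn]
  have hstep : (p₂ / p₁) ^ n * nbPMF n p₁ x ≤ nbPMF n p₂ x := by
    rw [nbPMF_eq, nbPMF_eq]
    have hrp : (p₂ / p₁) ^ n * p₁ ^ n = p₂ ^ n := by
      rw [Real.div_rpow h₂0.le h₁0.le]
      field_simp
    have hpow : (1 - p₁) ^ x ≤ (1 - p₂) ^ x :=
      pow_le_pow_left₀ (by linarith) (by linarith) x
    calc (p₂ / p₁) ^ n * (p₁ ^ n * (nbA n x * (1 - p₁) ^ x))
        = p₂ ^ n * (nbA n x * (1 - p₁) ^ x) := by rw [← mul_assoc, hrp]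
      _ ≤ p₂ ^ n * (nbA n x * (1 - p₂) ^ x) := by
          apply mul_le_mul_of_nonneg_left _ (Real.rpow_pos_of_pos h₂0 n).le
          exact mul_le_mul_of_nonneg_left hpow (nbA_pos hn x).le
  calc Real.exp (-(n * ((1 - p₂) / p₂ - (1 - p₁) / p₁))) * nbPMF n p₁ x
      ≤ (p₂ / p₁) ^ n * nbPMF n p₁ x :=
        mul_le_mul_of_nonneg_right hexp (nbPMF_nonneg hn ⟨h₁0, h₁1⟩ x)
    _ ≤ nbPMF n p₂ x := hstep

/-- One-sided version of the total variation bound, assuming `p₂ ≤ p₁`. -/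
lemma nbPMF_tv_one_sided {n p₁ p₂ : ℝ} (hn : 0 < n) (hp₁ : p₁ ∈ Set.Ioc (0:ℝ) 1)
    (hp₂ : p₂ ∈ Set.Ioc (0:ℝ) 1) (hle : p₂ ≤ p₁) (A : Set ℕ) :
    |(∑' x : A, nbPMF n p₁ x) - ∑' x : A, nbPMF n p₂ x| ≤
      1 - Real.exp (-(n * ((1 - p₂) / p₂ - (1 - p₁) / p₁))) := by
  obtain ⟨h₁0, h₁1⟩ := hp₁
  obtain ⟨h₂0, h₂1⟩ := hp₂
  set c : ℝ := Real.exp (-(n * ((1 - p₂) / p₂ - (1 - p₁) / p₁))) with hc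
  have hd0 : 0 ≤ (1 - p₂) / p₂ - (1 - p₁) / p₁ := by
    rw [sub_nonneg, div_le_div_iff₀ h₁0 h₂0]
    nlinarith
  have hc0 : 0 < c := Real.exp_pos _
  have hc1 : c ≤ 1 := by
    rw [hc]
    apply Real.exp_le_one_iff.2
    nlinarith
  have hs₁ : Summable (nbPMF n p₁) := nbPMF_summable hn ⟨h₁0, h₁1⟩
  have hs₂ : Summable (nbPMF n p₂) := nbPMF_summable hn ⟨h₂0, h₂1⟩
  have hn₁ : ∀ x, 0 ≤ nbPMF n p₁ x := nbPMF_nonneg hn ⟨h₁0, h₁1⟩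
  have hn₂ : ∀ x, 0 ≤ nbPMF n p₂ x := nbPMF_nonneg hn ⟨h₂0, h₂1⟩
  have hsub₁ : Summable (fun x : A => nbPMF n p₁ x) := hs₁.subtype A
  have hsub₂ : Summable (fun x : A => nbPMF n p₂ x) := hs₂.subtype A
  set S₁ : ℝ := ∑' x : A, nbPMF n p₁ x with hS₁
  set S₂ : ℝ := ∑' x : A, nbPMF n p₂ x with hS₂
  have hS₁nonneg : 0 ≤ S₁ := tsum_nonneg fun x => hn₁ x
  have hS₁le : S₁ ≤ 1 := by
    rw [hS₁, ← nbPMF_tsum hn ⟨h₁0, h₁1⟩]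
    exact Summable.tsum_subtype_le (nbPMF n p₁) A hn₁ hs₁
  have hpoint : ∀ x : ℕ, c * nbPMF n p₁ x ≤ nbPMF n p₂ x :=
    nbPMF_pointwise hn ⟨h₁0, h₁1⟩ ⟨h₂0, h₂1⟩ hle
  have hkey : c * S₁ ≤ S₂ := by
    rw [hS₁, hS₂, ← tsum_mul_left]
    exact Summable.tsum_le_tsum (fun x => hpoint x) (hsub₁.mul_left c) hsub₂
  rw [abs_sub_le_iff]
  constructor
  · -- S₁ - S₂ ≤ 1 - c
    nlinarith
  · -- S₂ - S₁ ≤ 1 - c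
    have hkey2 : S₂ - c * S₁ ≤ 1 - c := by
      have e1 : S₂ - c * S₁ = ∑' x : A, (nbPMF n p₂ x - c * nbPMF n p₁ x) := by
        rw [hS₁, hS₂, ← tsum_mul_left, Summable.tsum_sub hsub₂ (hsub₁.mul_left c)]
      have e2 : (∑' x : A, (nbPMF n p₂ x - c * nbPMF n p₁ x)) ≤
          ∑' x : ℕ, (nbPMF n p₂ x - c * nbPMF n p₁ x) :=
        Summable.tsum_subtype_le _ A (fun x => by linarith [hpoint x])
          (hs₂.sub (hs₁.mul_left c))
      have e3 : (∑' x : ℕ, (nbPMF n p₂ x - c * nbPMF n p₁ x)) = 1 - c := by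
        rw [Summable.tsum_sub hs₂ (hs₁.mul_left c), tsum_mul_left,
          nbPMF_tsum hn ⟨h₂0, h₂1⟩, nbPMF_tsum hn ⟨h₁0, h₁1⟩, mul_one]
      rw [e1]
      linarith
    nlinarith

/-- Total variation bound between two negative binomial distributions with the same
`n`: for every set `A` of nonnegative integers,
`|NB_{p₁}(A) − NB_{p₂}(A)| ≤ 1 − exp(−n |(1−p₁)/p₁ − (1−p₂)/p₂|)`. -/
theorem negBinomial_tv_bound (n p₁ p₂ : ℝ) (hn : 0 < n)
    (hp₁ : p₁ ∈ Set.Ioc (0 : ℝ) 1) (hp₂ : p₂ ∈ Set.Ioc (0 : ℝ) 1) :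
    ∀ A : Set ℕ,
      |(∑' x : A, nbPMF n p₁ x) - ∑' x : A, nbPMF n p₂ x| ≤
        1 - Real.exp (-(n * |(1 - p₁) / p₁ - (1 - p₂) / p₂|)) := by
  intro A
  rcases le_total p₂ p₁ with h | h
  · have habs : |(1 - p₁) / p₁ - (1 - p₂) / p₂| = (1 - p₂) / p₂ - (1 - p₁) / p₁ := by
      rw [abs_sub_comm]
      apply abs_of_nonneg
      rw [sub_nonneg, div_le_div_iff₀ hp₁.1 hp₂.1]
      nlinarith [hp₁.2, hp₂.2, hp₁.1, hp₂.1]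
    rw [habs]
    exact nbPMF_tv_one_sided hn hp₁ hp₂ h A
  · have habs : |(1 - p₁) / p₁ - (1 - p₂) / p₂| = (1 - p₁) / p₁ - (1 - p₂) / p₂ := by
      apply abs_of_nonneg
      rw [sub_nonneg, div_le_div_iff₀ hp₂.1 hp₁.1]
      nlinarith [hp₁.2, hp₂.2, hp₁.1, hp₂.1]
    rw [habs, abs_sub_comm]
    exact nbPMF_tv_one_sided hn hp₂ hp₁ h A
end

section
/- Let μ₁, μ₂ ≥ 0 and let P_{μ₁}, P_{μ₂} denote the Poisson probability measures on the nonnegative integers with means μ₁ and μ₂, i.e., with probability mass functions x ↦ e^{−μ_i}·μ_iˣ/x!. Then the total variation distance satisfies TV(P_{μ₁}, P_{μ₂}) ≤ 1 − exp(−|μ₁ − μ₂|). -/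
/-- The Poisson probability mass function with mean `μ ≥ 0`. -/
noncomputable def poissonPMF (μ : ℝ) (x : ℕ) : ℝ :=
  Real.exp (-μ) * μ ^ x / Nat.factorial x

lemma poissonPMF_nonneg {μ : ℝ} (hμ : 0 ≤ μ) (x : ℕ) : 0 ≤ poissonPMF μ x := by
  unfold poissonPMF
  positivity

lemma poissonPMF_summable (μ : ℝ) : Summable (poissonPMF μ) := by
  have := (Real.summable_pow_div_factorial μ).mul_left (Real.exp (-μ))
  convert this using 2 with x
  · rfl
  unfold poissonPMF; ring

lemma poissonPMF_tsum (μ : ℝ) : ∑' x, poissonPMF μ x = 1 := by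
  have h : ∑' x : ℕ, μ ^ x / (Nat.factorial x : ℝ) = Real.exp μ := by
    rw [Real.exp_eq_exp_ℝ, NormedSpace.exp_eq_tsum_div]
  calc ∑' x, poissonPMF μ x = Real.exp (-μ) * ∑' x : ℕ, μ ^ x / (Nat.factorial x : ℝ) := by
        rw [← tsum_mul_left]; congr 1 with x; unfold poissonPMF; ring
    _ = 1 := by rw [h, ← Real.exp_add]; simp

lemma poissonPMF_mono {μ₁ μ₂ : ℝ} (h0 : 0 ≤ μ₁) (h : μ₁ ≤ μ₂) (x : ℕ) :
    Real.exp (-(μ₂ - μ₁)) * poissonPMF μ₁ x ≤ poissonPMF μ₂ x := by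
  unfold poissonPMF
  have : Real.exp (-(μ₂ - μ₁)) * (Real.exp (-μ₁) * μ₁ ^ x / Nat.factorial x)
      = Real.exp (-μ₂) * μ₁ ^ x / Nat.factorial x := by
    rw [← mul_div_assoc, ← mul_assoc, ← Real.exp_add]; ring_nf
  rw [this]
  gcongr

-- P(A) ≤ 1, P over A
lemma tsum_subtype_le_one {μ : ℝ} (hμ : 0 ≤ μ) (A : Set ℕ) :
    ∑' x : A, poissonPMF μ x ≤ 1 := by
  rw [← poissonPMF_tsum μ]
  exact Summable.tsum_subtype_le _ _ (poissonPMF_nonneg hμ) (poissonPMF_summable μ)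

lemma tsum_subtype_nonneg' {μ : ℝ} (hμ : 0 ≤ μ) (A : Set ℕ) :
    0 ≤ ∑' x : A, poissonPMF μ x :=
  tsum_nonneg fun x => poissonPMF_nonneg hμ x

lemma aux {μ₁ μ₂ : ℝ} (h0 : 0 ≤ μ₁) (h : μ₁ ≤ μ₂) (A : Set ℕ) :
    (∑' x : A, poissonPMF μ₁ x) - ∑' x : A, poissonPMF μ₂ x ≤ 1 - Real.exp (-(μ₂ - μ₁)) := by
  have h1 : Real.exp (-(μ₂ - μ₁)) * ∑' x : A, poissonPMF μ₁ x ≤ ∑' x : A, poissonPMF μ₂ x := by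
    rw [← tsum_mul_left]
    exact Summable.tsum_le_tsum (fun x => poissonPMF_mono h0 h x)
      (((poissonPMF_summable μ₁).subtype A).mul_left _) ((poissonPMF_summable μ₂).subtype A)
  have h2 := tsum_subtype_le_one h0 A
  have h3 := tsum_subtype_nonneg' h0 A
  have h4 : Real.exp (-(μ₂ - μ₁)) ≤ 1 := Real.exp_le_one_iff.mpr (by linarith)
  nlinarith

lemma aux2 {μ₁ μ₂ : ℝ} (h0 : 0 ≤ μ₁) (h : μ₁ ≤ μ₂) (A : Set ℕ) :
    (∑' x : A, poissonPMF μ₂ x) - ∑' x : A, poissonPMF μ₁ x ≤ 1 - Real.exp (-(μ₂ - μ₁)) := by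
  have e1 : (∑' x : A, poissonPMF μ₁ x) + ∑' x : (Aᶜ : Set ℕ), poissonPMF μ₁ x = 1 := by
    rw [Summable.tsum_subtype_add_tsum_subtype_compl (poissonPMF_summable μ₁) A, poissonPMF_tsum]
  have e2 : (∑' x : A, poissonPMF μ₂ x) + ∑' x : (Aᶜ : Set ℕ), poissonPMF μ₂ x = 1 := by
    rw [Summable.tsum_subtype_add_tsum_subtype_compl (poissonPMF_summable μ₂) A, poissonPMF_tsum]
  have := aux h0 h Aᶜ
  linarith

/-- Total variation bound between two Poisson distributions: for every set `A` of
nonnegative integers, `|P_{μ₁}(A) − P_{μ₂}(A)| ≤ 1 − exp(−|μ₁ − μ₂|)`. -/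
theorem poisson_tv_bound (μ₁ μ₂ : ℝ) (hμ₁ : 0 ≤ μ₁) (hμ₂ : 0 ≤ μ₂) :
    ∀ A : Set ℕ,
      |(∑' x : A, poissonPMF μ₁ x) - ∑' x : A, poissonPMF μ₂ x| ≤
        1 - Real.exp (-|μ₁ - μ₂|) := by
  intro A
  rcases le_total μ₁ μ₂ with h | h
  · rw [show |μ₁ - μ₂| = μ₂ - μ₁ by rw [abs_of_nonpos (by linarith)]; ring, abs_sub_le_iff]
    exact ⟨aux hμ₁ h A, aux2 hμ₁ h A⟩
  · rw [show |μ₁ - μ₂| = μ₁ - μ₂ from abs_of_nonneg (by linarith), abs_sub_le_iff]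
    have h1 := aux hμ₂ h A
    have h2 := aux2 hμ₂ h A
    constructor <;> [convert h2 using 3; convert h1 using 3]
end
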